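/- Let m ≥ 2 and x ∈ ℝ. For an integer k ≥ 0, let s[k] = (Σ_{j=0}^{k−1} L^j) 𝟏 ∈ ℝ^m with coordinates s₁[k],…,s_m[k] (so that s₁[k] = k). Then for every integer k ≥ 1, ∫_{[0,1)^m} ⟨v_m⟩₀ · ⟨ v_m + Σ_{j=1}^{m−1} s_j[k] v_j + x s_m[k] ⟩₀ dv₁…dv_m = 0, while for k = 0 the same integral equals 1/12. Consequently, for the ideal m-th order Σ∆ schemes whose tile function is G_Γ(v) = ⟨v_m⟩₀, the autocorrelation sequence is ρ_u[k] = (1/12)·δ_{k,0} and the power spectral measure is (1/12) times Lebesgue measure on 𝕋. -/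

import Mathlib

open MeasureTheory Real

noncomputable section

/-- The d×d lower-triangular matrix of ones: `L i j = 1` iff `j ≤ i`. -/
def Lmat (d : ℕ) : Matrix (Fin d) (Fin d) ℝ :=
  fun i j => if j ≤ i then 1 else 0

/-- `s[k] = (∑_{j=0}^{k-1} L^j) 𝟏 ∈ ℝ^m`. -/
def svec (d k : ℕ) : Fin d → ℝ :=
  (∑ j ∈ Finset.range k, (Lmat d) ^ j).mulVec (fun _ => 1)

/-- `⟨α⟩₀`: the unique element of `[−1/2, 1/2)` congruent to `α` mod `ℤ`. -/
def frac0 (α : ℝ) : ℝ := α - round α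

/-- The unit cube `[0,1)^d ⊆ ℝ^d`. -/
def unitCube (d : ℕ) : Set (Fin d → ℝ) := Set.univ.pi fun _ => Set.Ico 0 1

lemma frac0_eq (x : ℝ) : frac0 x = Int.fract (x + 1/2) - 1/2 := by
  simp only [frac0, round_eq, Int.fract]
  push_cast
  ring

lemma measurable_frac0 : Measurable frac0 := by
  have : frac0 = fun x => Int.fract (x + 1/2) - 1/2 := funext frac0_eq
  rw [this]
  exact (measurable_fract.comp (measurable_add_const _)).sub measurable_const

lemma abs_frac0_le (x : ℝ) : |frac0 x| ≤ 1/2 := abs_sub_round x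

lemma frac0_periodic : Function.Periodic frac0 1 := by
  intro x
  simp only [frac0]
  rw [show x + 1 = x + (1:ℤ) by norm_num, round_add_intCast]
  push_cast; ring

lemma frac0_intervalIntegrable (a b : ℝ) : IntervalIntegrable frac0 volume a b := by
  rw [intervalIntegrable_iff]
  have : IsFiniteMeasure (volume.restrict (Set.uIoc a b)) := by
    rw [Set.uIoc]; infer_instance
  exact (integrable_const (1/2:ℝ)).mono' measurable_frac0.aestronglyMeasurable
    (ae_of_all _ fun x => by simpa [Real.norm_eq_abs] using abs_frac0_le x)

lemma frac0_eq_self {x : ℝ} (h1 : -(1/2) ≤ x) (h2 : x < 1/2) : frac0 x = x := by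
  have : round x = 0 := by
    rw [round_eq, Int.floor_eq_zero_iff]
    constructor <;> simp at * <;> linarith
  simp [frac0, this]

lemma ae_ne_half : ∀ᵐ x : ℝ, x ≠ (1/2:ℝ) := by
  refine MeasureTheory.ae_iff.2 ?_
  simpa using Real.volume_singleton

lemma integral_frac0_zero : ∫ x in (0:ℝ)..1, frac0 x = 0 := by
  have h1 : ∫ x in (0:ℝ)..(0+1:ℝ), frac0 x = ∫ x in (-(1/2):ℝ)..(-(1/2)+1:ℝ), frac0 x :=
    frac0_periodic.intervalIntegral_add_eq 0 (-(1/2))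
  have h2 : ∫ x in (-(1/2):ℝ)..(-(1/2)+1:ℝ), frac0 x = ∫ x in (-(1/2):ℝ)..(-(1/2)+1:ℝ), x := by
    apply intervalIntegral.integral_congr_ae
    filter_upwards [ae_ne_half] with x hx hmem
    rw [Set.uIoc_of_le (by norm_num)] at hmem
    exact frac0_eq_self hmem.1.le (lt_of_le_of_ne (by linarith [hmem.2]) hx)
  calc ∫ x in (0:ℝ)..1, frac0 x = ∫ x in (0:ℝ)..(0+1:ℝ), frac0 x := by norm_num
    _ = ∫ x in (-(1/2):ℝ)..(-(1/2)+1:ℝ), x := by rw [h1, h2]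
    _ = 0 := by rw [integral_id]; norm_num

lemma integral_frac0_sq : ∫ x in (0:ℝ)..1, frac0 x * frac0 x = 1/12 := by
  have hper : Function.Periodic (fun x => frac0 x * frac0 x) 1 :=
    frac0_periodic.mul frac0_periodic
  have h1 : ∫ x in (0:ℝ)..(0+1:ℝ), frac0 x * frac0 x
      = ∫ x in (-(1/2):ℝ)..(-(1/2)+1:ℝ), frac0 x * frac0 x :=
    hper.intervalIntegral_add_eq 0 (-(1/2))
  have h2 : ∫ x in (-(1/2):ℝ)..(-(1/2)+1:ℝ), frac0 x * frac0 x
      = ∫ x in (-(1/2):ℝ)..(-(1/2)+1:ℝ), x ^ 2 := by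
    apply intervalIntegral.integral_congr_ae
    filter_upwards [ae_ne_half] with x hx hmem
    rw [Set.uIoc_of_le (by norm_num)] at hmem
    rw [frac0_eq_self hmem.1.le (lt_of_le_of_ne (by linarith [hmem.2]) hx), sq]
  calc ∫ x in (0:ℝ)..1, frac0 x * frac0 x
      = ∫ x in (0:ℝ)..(0+1:ℝ), frac0 x * frac0 x := by norm_num
    _ = ∫ x in (-(1/2):ℝ)..(-(1/2)+1:ℝ), x ^ 2 := by rw [h1, h2]
    _ = 1/12 := by rw [integral_pow]; norm_num

lemma setIntegral_Ico_frac0_affine (m : ℤ) (hm : m ≠ 0) (c : ℝ) :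
    ∫ t in Set.Ico (0:ℝ) 1, frac0 ((m:ℝ) * t + c) = 0 := by
  have h0 : ∫ t in Set.Ico (0:ℝ) 1, frac0 ((m:ℝ) * t + c)
      = ∫ t in (0:ℝ)..1, frac0 ((m:ℝ) * t + c) := by
    rw [intervalIntegral.integral_of_le zero_le_one]
    exact setIntegral_congr_set Ico_ae_eq_Ioc
  rw [h0, intervalIntegral.integral_comp_mul_add frac0 (by exact_mod_cast hm) c]
  have h1 : (m:ℝ) * 1 + c = c + m • (1:ℝ) := by rw [zsmul_eq_mul]; ring
  have h2 : (m:ℝ) * 0 + c = c := by ring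
  rw [h1, h2, frac0_periodic.intervalIntegral_add_zsmul_eq m c frac0_intervalIntegrable,
    frac0_periodic.intervalIntegral_add_eq c 0]
  simp [integral_frac0_zero]

lemma setIntegral_Ico_frac0_sq : ∫ t in Set.Ico (0:ℝ) 1, frac0 t * frac0 t = 1/12 := by
  rw [setIntegral_congr_set Ico_ae_eq_Ioc, ← intervalIntegral.integral_of_le zero_le_one]
  exact integral_frac0_sq


def cubeMeasure (d : ℕ) : Measure (Fin d → ℝ) :=
  Measure.pi fun _ => (volume : Measure ℝ).restrict (Set.Ico 0 1)

instance : IsProbabilityMeasure ((volume : Measure ℝ).restrict (Set.Ico (0:ℝ) 1)) :=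
  ⟨by simp [Real.volume_Ico]⟩

instance (d : ℕ) : IsProbabilityMeasure (cubeMeasure d) := by
  unfold cubeMeasure; infer_instance

lemma restrict_unitCube (d : ℕ) :
    (volume : Measure (Fin d → ℝ)).restrict (unitCube d) = cubeMeasure d := by
  refine (Measure.pi_eq fun s hs => ?_).symm
  rw [Measure.restrict_apply (MeasurableSet.univ_pi hs), unitCube,
    ← Set.pi_inter_distrib, volume_pi_pi]
  exact Finset.prod_congr rfl fun i _ => (Measure.restrict_apply (hs i)).symm

lemma cube_integral_eq (n : ℕ) (i0 : Fin (n+1)) (f : (Fin (n+1) → ℝ) → ℝ)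
    (hf : Measurable f) (C : ℝ) (hC : ∀ v, |f v| ≤ C) :
    ∫ v in unitCube (n+1), f v
      = ∫ w : Fin n → ℝ, (∫ t in Set.Ico (0:ℝ) 1, f (Fin.insertNth i0 t w))
          ∂(cubeMeasure n) := by
  rw [restrict_unitCube]
  set μ1 := (volume : Measure ℝ).restrict (Set.Ico (0:ℝ) 1) with hμ1
  set e := MeasurableEquiv.piFinSuccAbove (fun _ : Fin (n+1) => ℝ) i0 with he
  have hmp : MeasurePreserving e (cubeMeasure (n+1)) (μ1.prod (cubeMeasure n)) :=
    measurePreserving_piFinSuccAbove (fun _ : Fin (n+1) => μ1) i0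
  have hsymm : ∀ p : ℝ × (Fin n → ℝ), e.symm p = Fin.insertNth i0 p.1 p.2 := by
    intro p
    simp [he, MeasurableEquiv.piFinSuccAbove_symm_apply, Fin.insertNthEquiv]
  have key : ∫ v, f v ∂(cubeMeasure (n+1))
      = ∫ p : ℝ × (Fin n → ℝ), f (e.symm p) ∂(μ1.prod (cubeMeasure n)) :=
    ((hmp.symm e).integral_comp' f).symm
  have hint : Integrable (fun p : ℝ × (Fin n → ℝ) => f (e.symm p)) (μ1.prod (cubeMeasure n)) := by
    refine (integrable_const C).mono'
      ((hf.comp e.symm.measurable).aestronglyMeasurable) (ae_of_all _ fun p => ?_)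
    simpa [Real.norm_eq_abs] using hC (e.symm p)
  rw [key, integral_prod_symm _ hint]
  exact integral_congr_ae (ae_of_all _ fun w => by simp only [hsymm])

lemma abs_bound (a b : ℝ) : |frac0 a * frac0 b| ≤ 1/4 := by
  have := mul_le_mul (abs_frac0_le a) (abs_frac0_le b) (abs_nonneg _) (by norm_num : (0:ℝ) ≤ 1/2)
  rw [abs_mul]; linarith

lemma cube_integral_vanish (n : ℕ) (i0 : Fin (n+1)) (h0 : i0 ≠ Fin.last n)
    (b : Fin (n+1) → ℝ) (m : ℤ) (hm : m ≠ 0) (hb : b i0 = (m:ℝ)) (c : ℝ) :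
    ∫ v in unitCube (n+1), frac0 (v (Fin.last n)) * frac0 ((∑ i, b i * v i) + c) = 0 := by
  have hmeas : Measurable fun v : Fin (n+1) → ℝ =>
      frac0 (v (Fin.last n)) * frac0 ((∑ i, b i * v i) + c) := by
    refine (measurable_frac0.comp (measurable_pi_apply _)).mul
      (measurable_frac0.comp (Measurable.add_const ?_ c))
    exact Finset.measurable_sum _ fun i _ => (measurable_pi_apply (X := fun _ => ℝ) i).const_mul (b i)
  rw [cube_integral_eq n i0 _ hmeas (1/4) (fun v => abs_bound _ _)]
  refine integral_eq_zero_of_ae (ae_of_all _ fun w => ?_)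
  obtain ⟨jl, hjl⟩ := Fin.exists_succAbove_eq (Ne.symm h0)
  have harg : ∀ t : ℝ, (∑ i, b i * (@Fin.insertNth _ (fun _ => ℝ) i0 t w) i) + c
      = (m:ℝ) * t + ((∑ j, b (i0.succAbove j) * w j) + c) := by
    intro t
    rw [Fin.sum_univ_succAbove (fun i => b i * (@Fin.insertNth _ (fun _ => ℝ) i0 t w) i) i0]
    simp only [Fin.insertNth_apply_same, Fin.insertNth_apply_succAbove]
    rw [hb]; ring
  have hlast : ∀ t : ℝ, (@Fin.insertNth _ (fun _ => ℝ) i0 t w) (Fin.last n) = w jl := by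
    intro t; rw [← hjl, Fin.insertNth_apply_succAbove]
  simp only [harg, hlast]
  rw [integral_const_mul, setIntegral_Ico_frac0_affine m hm, mul_zero]
  rfl

lemma cube_integral_sq (n : ℕ) :
    ∫ v in unitCube (n+1), frac0 (v (Fin.last n)) * frac0 (v (Fin.last n)) = 1/12 := by
  have hmeas : Measurable fun v : Fin (n+1) → ℝ =>
      frac0 (v (Fin.last n)) * frac0 (v (Fin.last n)) :=
    (measurable_frac0.comp (measurable_pi_apply _)).mul
      (measurable_frac0.comp (measurable_pi_apply _))
  rw [cube_integral_eq n (Fin.last n) _ hmeas (1/4) (fun v => abs_bound _ _)]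
  simp only [Fin.insertNth_apply_same, setIntegral_Ico_frac0_sq]
  simp


def LmatZ (d : ℕ) : Matrix (Fin d) (Fin d) ℤ := fun i j => if j ≤ i then 1 else 0

lemma Lmat_pow_map (d k : ℕ) :
    (Lmat d) ^ k = ((LmatZ d) ^ k).map (Int.cast : ℤ → ℝ) := by
  have h1 : Lmat d = (Int.castRingHom ℝ).mapMatrix (LmatZ d) := by
    ext i j
    simp [Lmat, LmatZ, Matrix.map_apply, apply_ite (Int.cast : ℤ → ℝ)]
  rw [h1, ← map_pow]
  rfl

lemma Lmat_pow_zero_row (d k : ℕ) : ∀ l : Fin (d+1),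
    ((Lmat (d+1)) ^ k) 0 l = if l = 0 then 1 else 0 := by
  induction k with
  | zero => intro l; rw [pow_zero, Matrix.one_apply]; simp [eq_comm]
  | succ k ih =>
    intro l
    rw [pow_succ, Matrix.mul_apply]
    simp only [ih, ite_mul, one_mul, zero_mul]
    rw [Finset.sum_ite_eq' Finset.univ (0 : Fin (d+1)) (fun p => Lmat (d+1) p l)]
    simp [Lmat, Fin.le_zero_iff]

lemma svec_zero (n k : ℕ) : svec (n+1) k 0 = (k : ℝ) := by
  unfold svec
  simp only [Matrix.mulVec, dotProduct, Matrix.sum_apply, mul_one,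
    Lmat_pow_zero_row]
  rw [Finset.sum_comm]
  simp

lemma LmatZ_pow_nonneg (d k : ℕ) : ∀ i j, 0 ≤ ((LmatZ d) ^ k) i j := by
  induction k with
  | zero =>
    intro i j
    rw [pow_zero, Matrix.one_apply]
    split <;> norm_num
  | succ k ih =>
    intro i j
    rw [pow_succ, Matrix.mul_apply]
    refine Finset.sum_nonneg fun p _ => mul_nonneg (ih i p) ?_
    unfold LmatZ; split <;> norm_num

lemma LmatZ_pow_last_zero (n : ℕ) : ∀ k, 1 ≤ k → 1 ≤ ((LmatZ (n+1)) ^ k) (Fin.last n) 0 := by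
  intro k hk
  induction k with
  | zero => omega
  | succ k ih =>
    have h0 : ∀ p, LmatZ (n+1) p 0 = 1 := fun p => if_pos (Fin.zero_le p)
    rcases Nat.eq_zero_or_pos k with rfl | hk'
    · rw [pow_one, h0]
    · rw [pow_succ, Matrix.mul_apply]
      calc (1:ℤ) ≤ ((LmatZ (n+1))^k) (Fin.last n) 0 * LmatZ (n+1) 0 0 := by
            rw [h0, mul_one]; exact ih hk'
        _ ≤ ∑ p, ((LmatZ (n+1))^k) (Fin.last n) p * LmatZ (n+1) p 0 :=
            Finset.single_le_sum
              (fun p _ => mul_nonneg (LmatZ_pow_nonneg _ _ _ _) (by rw [h0 p]; norm_num))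
              (Finset.mem_univ 0)

lemma svec_k_zero (d : ℕ) : svec d 0 = 0 := by
  simp [svec]
/-- for `m = n + 1 ≥ 2` and any `x ∈ ℝ`, the integral
`∫_{[0,1)^m} ⟨v_m⟩₀ ⟨v_m + ∑_{j=1}^{m−1} s_j[k] v_j + x s_m[k]⟩₀ dv` equals `1/12` for
`k = 0` and `0` for every `k ≥ 1`.  Consequently, for the ideal m-th order Σ∆ scheme
with tile function `G_Γ(v) = ⟨v_m⟩₀`, the autocorrelation sequence
`ρ_u[k] = ∫_{[0,1)^m} G_Γ(v) G_Γ(L^k v + x s[k]) dv` equals `(1/12) δ_{k,0}` (so the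
power spectral measure is `1/12` times Lebesgue measure on `𝕋`). -/
theorem ideal_scheme_autocorrelation (n : ℕ) (hn : 1 ≤ n) (x : ℝ) (k : ℕ) :
    (∫ v in unitCube (n+1),
        frac0 (v (Fin.last n)) *
          frac0 (v (Fin.last n)
            + (∑ i : Fin n, svec (n+1) k i.castSucc * v i.castSucc)
            + x * svec (n+1) k (Fin.last n)))
      = (if k = 0 then (1 : ℝ) / 12 else 0) ∧
    (∫ v in unitCube (n+1),
        frac0 (v (Fin.last n)) *
          frac0 ((((Lmat (n+1)) ^ k).mulVec v + x • svec (n+1) k) (Fin.last n)))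
      = (if k = 0 then (1 : ℝ) / 12 else 0) := by
  have h0last : (0 : Fin (n+1)) ≠ Fin.last n := by
    simp only [ne_eq, Fin.ext_iff, Fin.val_zero, Fin.val_last]
    omega
  constructor
  · -- first integral
    rcases Nat.eq_zero_or_pos k with rfl | hk
    · rw [if_pos rfl]
      have hs : svec (n+1) 0 = 0 := svec_k_zero (n+1)
      simp only [hs, Pi.zero_apply, mul_zero, zero_mul, Finset.sum_const_zero, add_zero]
      exact cube_integral_sq n
    · rw [if_neg (by omega)]
      set b : Fin (n+1) → ℝ := fun i => if i = Fin.last n then 1 else svec (n+1) k i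
        with hbdef
      have hb0 : b 0 = ((k : ℤ) : ℝ) := by
        rw [hbdef]
        simp only [if_neg h0last]
        rw [svec_zero]
        norm_num
      have key := cube_integral_vanish n 0 h0last b (k : ℤ)
        (by exact_mod_cast hk.ne') hb0 (x * svec (n+1) k (Fin.last n))
      rw [← key]
      refine integral_congr_ae (ae_of_all _ fun v => ?_)
      dsimp only
      congr 1
      have hcs : ∀ i : Fin n, b i.castSucc = svec (n+1) k i.castSucc :=
        fun i => if_neg (Fin.castSucc_lt_last i).ne
      have hbl : b (Fin.last n) = 1 := if_pos rfl
      rw [Fin.sum_univ_castSucc (f := fun i => b i * v i), hbl]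
      simp only [hcs]
      ring
  · -- second integral
    rcases Nat.eq_zero_or_pos k with rfl | hk
    · rw [if_pos rfl]
      have hs : svec (n+1) 0 = 0 := svec_k_zero (n+1)
      simp only [hs, pow_zero, Matrix.one_mulVec, smul_zero, add_zero]
      exact cube_integral_sq n
    · rw [if_neg (by omega)]
      set m : ℤ := ((LmatZ (n+1)) ^ k) (Fin.last n) 0 with hmdef
      have hm1 : 1 ≤ m := LmatZ_pow_last_zero n k hk
      set b : Fin (n+1) → ℝ := fun j => ((Lmat (n+1)) ^ k) (Fin.last n) j with hbdef
      have hb0 : b 0 = (m : ℝ) := by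
        rw [hbdef, Lmat_pow_map]
        simp [Matrix.map_apply, hmdef]
      have key := cube_integral_vanish n 0 h0last b m (by omega) hb0
        (x * svec (n+1) k (Fin.last n))
      rw [← key]
      refine integral_congr_ae (ae_of_all _ fun v => ?_)
      dsimp only
      congr 1
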